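/- For 1 <= s <= t with s+t >= 3, there exist distinct vertex sets F_1, F_2 in LeTQ(s,t) with |F_1| = s+1, |F_2| = s+2, which are indistinguishable under the MM* model; consequently the diagnosability of LeTQ(s,t) under the MM* model is at most s+1. -/

import Mathlib

/-- Flip bit `k` of the binary string `x`. -/
def bflip {n : ℕ} (x : Fin n → Bool) (k : Fin n) : Fin n → Bool :=
  Function.update x k (!(x k))

/-- Locally twisted cube adjacency on `n`-bit binary strings:
either flip bit `k` for some `k ≤ 1`; or, for some `k ≥ 2`, flip bits `k` and `k-1`
when bit 0 is `1`, resp. flip only bit `k` when bit 0 is `0`. -/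
def cubeAdj (n : ℕ) (x y : Fin n → Bool) : Prop :=
  (∃ k : Fin n, (k : ℕ) ≤ 1 ∧ y = bflip x k) ∨
  (∃ k : Fin n, 2 ≤ (k : ℕ) ∧
    ((∃ h0 : 0 < n, x ⟨0, h0⟩ = true ∧
        y = bflip (bflip x k) ⟨(k : ℕ) - 1, lt_of_le_of_lt (Nat.sub_le _ _) k.isLt⟩) ∨
     (∃ h0 : 0 < n, x ⟨0, h0⟩ = false ∧ y = bflip x k)))

/-- The locally twisted cube `LTQ_n`. -/
def LTQ (n : ℕ) : SimpleGraph (Fin n → Bool) where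
  Adj x y := x ≠ y ∧ (cubeAdj n x y ∨ cubeAdj n y x)
  symm := ⟨fun _ _ h => ⟨h.1.symm, h.2.symm⟩⟩
  loopless := ⟨fun _ h => h.1 rfl⟩

/-- A vertex of `LeTQ(s,t)`: the `a`-bits, the `b`-bits and the bit `c`. -/
abbrev LeTQVert (s t : ℕ) := (Fin s → Bool) × (Fin t → Bool) × Bool

/-- One-sided adjacency condition of the locally exchanged twisted cube. -/
def LeTQAdjOne (s t : ℕ) (u v : LeTQVert s t) : Prop :=
  (u.1 = v.1 ∧ u.2.1 = v.2.1 ∧ u.2.2 = !v.2.2) ∨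
  (u.2.2 = true ∧ v.2.2 = true ∧ u.1 = v.1 ∧ cubeAdj t u.2.1 v.2.1) ∨
  (u.2.2 = false ∧ v.2.2 = false ∧ u.2.1 = v.2.1 ∧ cubeAdj s u.1 v.1)

/-- The locally exchanged twisted cube `LeTQ(s,t)`. -/
def LeTQ (s t : ℕ) : SimpleGraph (LeTQVert s t) where
  Adj u v := u ≠ v ∧ (LeTQAdjOne s t u v ∨ LeTQAdjOne s t v u)
  symm := ⟨fun _ _ h => ⟨h.1.symm, h.2.symm⟩⟩
  loopless := ⟨fun _ h => h.1 rfl⟩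

/-- Distinguishability of two faulty sets under the MM* model. -/
def mmDistinguishable {V : Type*} (G : SimpleGraph V) (F1 F2 : Set V) : Prop :=
  (∃ u w v, u ∉ F1 ∪ F2 ∧ w ∉ F1 ∪ F2 ∧ v ∈ symmDiff F1 F2 ∧ G.Adj u w ∧ G.Adj v w) ∨
  (∃ u v w, u ∈ F1 \ F2 ∧ v ∈ F1 \ F2 ∧ u ≠ v ∧ w ∉ F1 ∪ F2 ∧ G.Adj u w ∧ G.Adj v w) ∨
  (∃ u v w, u ∈ F2 \ F1 ∧ v ∈ F2 \ F1 ∧ u ≠ v ∧ w ∉ F1 ∪ F2 ∧ G.Adj u w ∧ G.Adj v w)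

lemma bflip_invol {n : ℕ} (x : Fin n → Bool) (k : Fin n) : bflip (bflip x k) k = x := by
  funext j
  by_cases h : j = k <;> simp [bflip, Function.update, h]

lemma bflip_apply_ne {n : ℕ} (x : Fin n → Bool) (k j : Fin n) (h : j ≠ k) :
    bflip x k j = x j := by simp [bflip, Function.update, h]

lemma bflip_apply_self {n : ℕ} (x : Fin n → Bool) (k : Fin n) :
    bflip x k k = !(x k) := by simp [bflip]

/-- from `cubeAdj x y` with `x = 0`, `y` is a single flip of `0`. -/
lemma cubeAdj_zero_right {n : ℕ} {y : Fin n → Bool}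
    (h : cubeAdj n (fun _ => false) y) : ∃ k, y = bflip (fun _ => false) k := by
  rcases h with ⟨k, _, hy⟩ | ⟨k, hk2, ⟨h0, hx0, _⟩ | ⟨h0, _, hy⟩⟩
  · exact ⟨k, hy⟩
  · simp at hx0
  · exact ⟨k, hy⟩

lemma cubeAdj_zero_left {n : ℕ} {y : Fin n → Bool}
    (h : cubeAdj n y (fun _ => false)) : ∃ k, y = bflip (fun _ => false) k := by
  rcases h with ⟨k, _, hy⟩ | ⟨k, hk2, ⟨h0, hy0, hy⟩ | ⟨h0, _, hy⟩⟩
  · exact ⟨k, by rw [hy, bflip_invol]⟩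
  · -- y bit 0 = true but flipping bits k, k-1 (both ≥ 1) of y gives 0, contradiction
    exfalso
    have h0ne : (⟨0, h0⟩ : Fin n) ≠ k := by
      intro h; apply absurd (congrArg Fin.val h); simp; omega
    have h0ne' : (⟨0, h0⟩ : Fin n) ≠ ⟨(k : ℕ) - 1, lt_of_le_of_lt (Nat.sub_le _ _) k.isLt⟩ := by
      intro h; apply absurd (congrArg Fin.val h); simp; omega
    have := congrFun hy ⟨0, h0⟩
    rw [bflip_apply_ne _ _ _ h0ne', bflip_apply_ne _ _ _ h0ne, hy0] at this
    simp at this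
  · exact ⟨k, by rw [hy, bflip_invol]⟩

section
variable (s t : ℕ)

def v0 : LeTQVert s t := (fun _ => false, fun _ => false, false)
def w0 : LeTQVert s t := (fun _ => false, fun _ => false, true)
def fk (k : Fin s) : LeTQVert s t := (bflip (fun _ => false) k, fun _ => false, false)

def F1 : Set (LeTQVert s t) := insert (w0 s t) (Set.range (fk s t))
def F2 : Set (LeTQVert s t) := insert (v0 s t) (F1 s t)

lemma adj_v0 {w : LeTQVert s t} (h : (LeTQ s t).Adj (v0 s t) w) : w ∈ F1 s t := by
  obtain ⟨hne, h1 | h1⟩ := h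
  · rcases h1 with ⟨ha, hb, hc⟩ | ⟨hc, _, _, _⟩ | ⟨_, hc, hb, hca⟩
    · left
      have : w.2.2 = true := by simpa [v0] using hc
      simp only [v0] at ha hb
      cases w with | mk a bc => cases bc with | mk b c =>
        simp_all [w0]
    · simp [v0] at hc
    · obtain ⟨k, hk⟩ := cubeAdj_zero_right (by simpa [v0] using hca)
      right
      refine ⟨k, ?_⟩
      cases w with | mk a bc => cases bc with | mk b c =>
        simp only [v0] at hb hc
        simp_all [fk]
  · rcases h1 with ⟨ha, hb, hc⟩ | ⟨_, hc, _, _⟩ | ⟨hc, _, hb, hca⟩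
    · left
      have hc' : w.2.2 = true := by simpa [v0] using hc
      simp only [v0] at ha hb
      cases w with | mk a bc => cases bc with | mk b c =>
        simp_all [w0]
    · simp [v0] at hc
    · obtain ⟨k, hk⟩ := cubeAdj_zero_left (by simpa [v0] using hca)
      right
      refine ⟨k, ?_⟩
      cases w with | mk a bc => cases bc with | mk b c =>
        simp only [v0] at hb hc
        simp_all [fk]

end

section
variable (s t : ℕ)

lemma fk_inj : Function.Injective (fk s t) := by
  intro j k h
  have := congrFun (congrArg Prod.fst h) j
  simp only [fk, bflip_apply_self] at this
  by_contra hne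
  rw [bflip_apply_ne _ _ _ hne] at this
  simp at this

lemma w0_not_range : w0 s t ∉ Set.range (fk s t) := by
  rintro ⟨k, hk⟩
  have := congrArg (fun p => p.2.2) hk
  simp [w0, fk] at this

lemma v0_not_F1 : v0 s t ∉ F1 s t := by
  rintro (h | ⟨k, hk⟩)
  · have := congrArg (fun p => p.2.2) h
    simp [w0, v0] at this
  · have := congrFun (congrArg Prod.fst hk) k
    simp only [fk, bflip_apply_self] at this
    simp [v0] at this

lemma F1_fin : (F1 s t).Finite := (Set.finite_range _).insert _

lemma F1_ncard : (F1 s t).ncard = s + 1 := by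
  rw [F1, Set.ncard_insert_of_notMem (w0_not_range s t) ((Set.finite_range _)),
    show (Set.range (fk s t)).ncard = s from ?_]
  rw [← Set.image_univ, Set.ncard_image_of_injective _ (fk_inj s t), Set.ncard_univ]
  simp

lemma F2_ncard : (F2 s t).ncard = s + 2 := by
  rw [F2, Set.ncard_insert_of_notMem (v0_not_F1 s t) (F1_fin s t), F1_ncard]

end

lemma sd_eq (s t : ℕ) {v : LeTQVert s t} (h : v ∈ symmDiff (F1 s t) (F2 s t)) :
    v = v0 s t := by
  rw [Set.mem_symmDiff] at h
  rcases h with ⟨h1, h2⟩ | ⟨h2, h1⟩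
  · exact absurd (Set.mem_insert_of_mem _ h1) h2
  · rcases h2 with h | h
    · exact h
    · exact absurd h h1

lemma not_mm (s t : ℕ) : ¬ mmDistinguishable (LeTQ s t) (F1 s t) (F2 s t) := by
  rintro (⟨u, w, v, hu, hw, hv, huw, hvw⟩ | ⟨u, v, w, hu, _, _, _, _, _⟩ |
    ⟨u, v, w, hu, hv, huv, _, _, _⟩)
  · have : v = v0 s t := sd_eq s t hv
    subst this
    exact hw (Or.inl (adj_v0 s t hvw))
  · exact hu.2 (Set.mem_insert_of_mem _ hu.1)
  · have hu' : u = v0 s t := by rcases hu.1 with h | h; exact h; exact absurd h hu.2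
    have hv' : v = v0 s t := by rcases hv.1 with h | h; exact h; exact absurd h hv.2
    exact huv (hu'.trans hv'.symm)


/-- There is an indistinguishable pair of sizes s+1 and s+2 under MM*, hence the
diagnosability of LeTQ(s,t) under MM* is at most s+1. -/
theorem stmt17 (s t : ℕ) (hs : 1 ≤ s) (hst : s ≤ t) (h3 : 3 ≤ s + t) :
    (∃ F1 F2 : Set (LeTQVert s t), F1 ≠ F2 ∧ F1.ncard = s + 1 ∧ F2.ncard = s + 2 ∧
      ¬ mmDistinguishable (LeTQ s t) F1 F2) ∧
    ¬ (∀ F1 F2 : Set (LeTQVert s t), F1 ≠ F2 → F1.ncard ≤ s + 2 → F2.ncard ≤ s + 2 →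
        mmDistinguishable (LeTQ s t) F1 F2) := by
  have hne : F1 s t ≠ F2 s t := by
    intro h
    exact v0_not_F1 s t (h ▸ Set.mem_insert _ _)
  refine ⟨⟨F1 s t, F2 s t, hne, F1_ncard s t, F2_ncard s t, not_mm s t⟩, ?_⟩
  intro H
  exact not_mm s t (H _ _ hne (by rw [F1_ncard]; omega) (by rw [F2_ncard]))
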